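/- Let (X,d) be a compact metric space, T a homeomorphism, μ a T-invariant Borel probability measure, and f ∈ L¹(X,μ). If f is μ-equicontinuous in the mean, then μ has bounded complexity with respect to the pseudometrics f̂_n: for every ε>0 there exists C ∈ ℕ such that for every n≥1 there is a finite set F ⊂ X with #F ≤ C and μ(⋃_{x∈F}{y : f̂_n(x,y) < ε}) > 1−ε, where f̂_n(x,y) = max_{1≤k≤n} (1/k)∑_{i=0}^{k−1}|f(Tⁱx)−f(Tⁱy)|. -/

import Mathlib

open MeasureTheory Filter Metric Set

/-- Birkhoff average of `|f(Tⁱx) - f(Tⁱy)|`. -/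
noncomputable def fbar {X : Type*} (T : X → X) (f : X → ℝ) (n : ℕ) (x y : X) : ℝ :=
  (∑ i ∈ Finset.range n, |f (T^[i] x) - f (T^[i] y)|) / n

/-- `f̂ₙ(x,y) = max_{1 ≤ k ≤ n} f̄ₖ(x,y)`. -/
noncomputable def fhat {X : Type*} (T : X → X) (f : X → ℝ) (n : ℕ) (x y : X) : ℝ :=
  ⨆ k : Fin n, fbar T f (k + 1) x y

theorem stmt4 {X : Type*} [MetricSpace X] [CompactSpace X]
    [MeasurableSpace X] [BorelSpace X]
    (T : X ≃ₜ X) (μ : Measure X) [IsProbabilityMeasure μ]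
    (hT : MeasurePreserving (⇑T) μ μ) (f : X → ℝ) (hf : Integrable f μ)
    (hmean : ∀ τ : ℝ, 0 < τ → ∃ K : Set X, IsCompact K ∧
      μ K > ENNReal.ofReal (1 - τ) ∧
      ∀ ε : ℝ, 0 < ε → ∃ δ : ℝ, 0 < δ ∧ ∀ x ∈ K, ∀ y ∈ K, dist x y < δ →
        ∀ n : ℕ, 1 ≤ n → fbar (⇑T) f n x y < ε) :
    ∀ ε : ℝ, 0 < ε → ∃ C : ℕ, ∀ n : ℕ, 1 ≤ n → ∃ F : Finset X,
      F.card ≤ C ∧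
      μ (⋃ x ∈ F, {y : X | fhat (⇑T) f n x y < ε}) > ENNReal.ofReal (1 - ε) := by
  intro ε hε
  obtain ⟨K, hKc, hKμ, hKeq⟩ := hmean ε hε
  obtain ⟨δ, hδ, hδK⟩ := hKeq ε hε
  obtain ⟨t, htK, htfin, htcov⟩ := hKc.finite_cover_balls hδ
  refine ⟨htfin.toFinset.card, fun n hn => ⟨htfin.toFinset, le_rfl, ?_⟩⟩
  have hsub : K ⊆ ⋃ x ∈ htfin.toFinset, {y : X | fhat (⇑T) f n x y < ε} := by
    intro y hy
    obtain ⟨x, hx, hyx⟩ := mem_iUnion₂.1 (htcov hy)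
    refine mem_iUnion₂.2 ⟨x, htfin.mem_toFinset.2 hx, ?_⟩
    have hlt : ∀ k : Fin n, fbar (⇑T) f (k + 1) x y < ε := fun k =>
      hδK x (htK hx) y hy (by simpa [dist_comm] using hyx) (k + 1) (Nat.le_add_left 1 k)
    have : Nonempty (Fin n) := ⟨⟨0, hn⟩⟩
    obtain ⟨k₀, hk₀⟩ := Finite.exists_max (fun k : Fin n => fbar (⇑T) f (k + 1) x y)
    calc fhat (⇑T) f n x y ≤ fbar (⇑T) f (k₀ + 1) x y := ciSup_le hk₀
    _ < ε := hlt k₀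
  calc ENNReal.ofReal (1 - ε) < μ K := hKμ
  _ ≤ _ := measure_mono hsub
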